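/- Let σ be a density operator on ℂ^d ⊗ ℂ^d with operator Schmidt decomposition σ = Σ_{α=1}^{D} F^α ⊗ G^α. Define the MPDO tensor on physical space (ℂ^d)^{⊗4} by W^{αβ} := G^α ⊗ σ ⊗ F^β. Then the resulting MPDO on L sites (with periodic boundary), ρ^{(L)} = Σ_{α₁,…,α_L} W^{α₁α₂} ⊗ W^{α₂α₃} ⊗ ⋯ ⊗ W^{α_Lα₁}, equals a tensor product of 'dimer' states: ρ^{(L)} = ⊗_{j=1}^{L} σ_{4j-2,4j-1} · ⊗_{i=1}^{L} σ_{4i,4i+1} (indices mod 4L), i.e., a product of commuting two-body factors σ placed on alternating adjacent pairs, which in particular equals e^{-H_L} for the commuting Hamiltonian H_L = −Σ_j ln σ_{4j-2,4j-1} − Σ_i ln σ_{4i,4i+1} when σ > 0. -/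

import Mathlib

open scoped ComplexOrder

/-- Let `σ` be a density operator on `ℂ^d ⊗ ℂ^d` with operator Schmidt
decomposition `σ = Σ_α F^α ⊗ G^α`, and define the MPDO tensor `W^{αβ} = G^α ⊗ σ ⊗ F^β` on the
physical space `(ℂ^d)^{⊗4}` (sites of block `j` labeled `(j,0),(j,1),(j,2),(j,3)`). Then the
MPDO on `L` sites with periodic boundary,
`ρ^{(L)} = Σ_{α₁,…,α_L} W^{α₁α₂} ⊗ ⋯ ⊗ W^{α_Lα₁}` (written entrywise below), equals the product
of dimers `⊗_j σ_{(j,1),(j,2)} · ⊗_j σ_{(j,3),(j+1,0)}` (indices cyclic); moreover when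
`σ > 0`, `σ = e^{-h}` for a Hermitian `h`, so `ρ^{(L)}` is the Gibbs state of a commuting
local Hamiltonian. -/
theorem stmt16 (d D L : ℕ) [NeZero L]
    (σ : Matrix (Fin d × Fin d) (Fin d × Fin d) ℂ)
    (hσpsd : σ.PosSemidef) (hσtr : σ.trace = 1)
    (F G : Fin D → Matrix (Fin d) (Fin d) ℂ)
    (hdec : ∀ s t : Fin d × Fin d, σ s t = ∑ α, F α s.1 t.1 * G α s.2 t.2) :
    (∀ x y : Fin L × Fin 4 → Fin d,
      (∑ α : Fin L → Fin D, ∏ j : Fin L,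
        (G (α j) (x (j, 0)) (y (j, 0)) * σ (x (j, 1), x (j, 2)) (y (j, 1), y (j, 2)) *
          F (α (j + 1)) (x (j, 3)) (y (j, 3))))
      = (∏ j : Fin L, σ (x (j, 1), x (j, 2)) (y (j, 1), y (j, 2))) *
        (∏ j : Fin L, σ (x (j, 3), x (j + 1, 0)) (y (j, 3), y (j + 1, 0)))) ∧
    (σ.PosDef → ∃ h : Matrix (Fin d × Fin d) (Fin d × Fin d) ℂ,
      h.IsHermitian ∧ σ = NormedSpace.exp (-h)) := by
  constructor
  · intro x y
    have h1 : ∀ α : Fin L → Fin D,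
        (∏ j : Fin L, (G (α j) (x (j, 0)) (y (j, 0)) *
            σ (x (j, 1), x (j, 2)) (y (j, 1), y (j, 2)) *
            F (α (j + 1)) (x (j, 3)) (y (j, 3))))
        = (∏ j : Fin L, σ (x (j, 1), x (j, 2)) (y (j, 1), y (j, 2))) *
          ∏ j : Fin L, (F (α j) (x (j - 1, 3)) (y (j - 1, 3)) *
            G (α j) (x (j, 0)) (y (j, 0))) := by
      intro α
      rw [Finset.prod_mul_distrib, Finset.prod_mul_distrib, Finset.prod_mul_distrib]
      have h2 : (∏ j : Fin L, F (α (j + 1)) (x (j, 3)) (y (j, 3)))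
          = ∏ j : Fin L, F (α j) (x (j - 1, 3)) (y (j - 1, 3)) := by
        refine Fintype.prod_equiv (Equiv.addRight (1 : Fin L)) _ _ (fun j => ?_)
        simp
      rw [h2]; ring
    rw [Finset.sum_congr rfl (fun α _ => h1 α), ← Finset.mul_sum]
    congr 1
    rw [show (∑ α : Fin L → Fin D, ∏ j : Fin L,
        F (α j) (x (j - 1, 3)) (y (j - 1, 3)) * G (α j) (x (j, 0)) (y (j, 0)))
        = ∏ j : Fin L, ∑ a : Fin D, F a (x (j - 1, 3)) (y (j - 1, 3)) * G a (x (j, 0)) (y (j, 0))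
      from (Fintype.prod_sum (κ := fun _ : Fin L => Fin D)
        (fun j a => F a (x (j - 1, 3)) (y (j - 1, 3)) * G a (x (j, 0)) (y (j, 0)))).symm]
    refine Fintype.prod_equiv (Equiv.subRight (1 : Fin L)) _ _ (fun j => ?_)
    simp only [Equiv.subRight_apply, sub_add_cancel]
    exact (hdec (x (j - 1, 3), x (j, 0)) (y (j - 1, 3), y (j, 0))).symm
  · intro hpd
    have hH := hσpsd.1
    set U : Matrix (Fin d × Fin d) (Fin d × Fin d) ℂ :=
      (hH.eigenvectorUnitary : Matrix (Fin d × Fin d) (Fin d × Fin d) ℂ) with hU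
    set v : Fin d × Fin d → ℂ := fun i => (Real.log (hH.eigenvalues i) : ℂ) with hv
    have hvstar : star v = v := by
      funext i
      simp [hv, Complex.conj_ofReal]
    refine ⟨-(U * Matrix.diagonal v * star U), ?_, ?_⟩
    · show Matrix.conjTranspose _ = _
      simp only [Matrix.conjTranspose_neg, Matrix.conjTranspose_mul,
        Matrix.star_eq_conjTranspose, Matrix.conjTranspose_conjTranspose,
        Matrix.diagonal_conjTranspose, hvstar, Matrix.mul_assoc]
    · rw [neg_neg]
      set Uu : (Matrix (Fin d × Fin d) (Fin d × Fin d) ℂ)ˣ :=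
        Unitary.toUnits hH.eigenvectorUnitary with hUu
      have hc1 : (Uu : Matrix (Fin d × Fin d) (Fin d × Fin d) ℂ) = U := rfl
      have hc2 : ((Uu⁻¹ : (Matrix (Fin d × Fin d) (Fin d × Fin d) ℂ)ˣ) :
          Matrix (Fin d × Fin d) (Fin d × Fin d) ℂ) = star U := rfl
      rw [← hc2, ← hc1, Matrix.exp_units_conj, Matrix.exp_diagonal]
      have hexp : NormedSpace.exp v = fun i => ((hH.eigenvalues i : ℝ) : ℂ) := by
        funext i
        rw [hv]
        rw [Pi.coe_exp, ← Complex.exp_eq_exp_ℂ, ← Complex.ofReal_exp,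
          Real.exp_log (hpd.eigenvalues_pos i)]
      rw [hexp, hc1, hc2]
      exact hH.spectral_theorem
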